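/- Let ξ ∈ ℝ³ with ξ ≠ 0 and let v ∈ ℂ³ satisfy ξ₁v₁ + ξ₂v₂ + ξ₃v₃ = 0 (unconjugated dot product, with ξ regarded as a vector in ℂ³). Define w = v + (i/‖ξ‖) (ξ × v), where × is the cross product on ℂ³ and ‖ξ‖ is the Euclidean norm of ξ. Then ξ₁w₁ + ξ₂w₂ + ξ₃w₃ = 0 and i (ξ × w) = ‖ξ‖ w. -/

import Mathlib

open scoped BigOperators

/-- For `ξ ∈ ℝ³ \ {0}` and `v ∈ ℂ³` with `ξ·v = 0` (unconjugated),
the vector `w = v + (i/‖ξ‖) (ξ × v)` satisfies `ξ·w = 0` and `i(ξ × w) = ‖ξ‖ w`. -/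
theorem beltrami_fourier (ξ : EuclideanSpace ℝ (Fin 3)) (hξ : ξ ≠ 0)
    (v : Fin 3 → ℂ) (hv : ∑ i, (ξ i : ℂ) * v i = 0)
    (w : Fin 3 → ℂ)
    (hw : w = v + (Complex.I / (‖ξ‖ : ℂ)) • crossProduct (fun i => (ξ i : ℂ)) v) :
    (∑ i, (ξ i : ℂ) * w i = 0) ∧
      Complex.I • crossProduct (fun i => (ξ i : ℂ)) w = (‖ξ‖ : ℂ) • w := by
  have hN0 : ‖ξ‖ ≠ 0 := norm_ne_zero_iff.mpr hξ
  have hNc : (‖ξ‖ : ℂ) ≠ 0 := by exact_mod_cast hN0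
  have hNsq : ((‖ξ‖ : ℂ))^2 = (ξ 0 : ℂ)^2 + (ξ 1 : ℂ)^2 + (ξ 2 : ℂ)^2 := by
    have : ‖ξ‖^2 = (ξ 0)^2 + (ξ 1)^2 + (ξ 2)^2 := by
      rw [EuclideanSpace.norm_eq]
      rw [Real.sq_sqrt (by positivity)]
      simp [Fin.sum_univ_three, sq_abs, sq]
    exact_mod_cast this
  rw [Fin.sum_univ_three] at hv
  subst hw
  constructor
  · simp only [crossProduct, Fin.sum_univ_three, Pi.add_apply, Pi.smul_apply,
      LinearMap.mk₂_apply, Matrix.cons_val_zero, Matrix.cons_val_one, Matrix.head_cons,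
      Matrix.cons_val_two, Matrix.tail_cons, smul_eq_mul]
    linear_combination hv
  · funext i
    simp only [crossProduct, Pi.add_apply, Pi.smul_apply, LinearMap.mk₂_apply,
      Matrix.cons_val_zero, Matrix.cons_val_one, Matrix.head_cons,
      Matrix.cons_val_two, Matrix.tail_cons, smul_eq_mul, LinearMap.map_add,
      LinearMap.add_apply, map_smul]
    fin_cases i <;>
      simp only [Matrix.cons_val_zero, Matrix.cons_val_one, Matrix.head_cons,
        Matrix.cons_val_two, Matrix.tail_cons, Pi.add_apply, Pi.smul_apply, smul_eq_mul,
        Fin.zero_eta, Fin.mk_one, Fin.isValue, Matrix.cons_val] <;>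
      (try simp only [show ((⟨2, by norm_num⟩ : Fin 3)) = 2 from rfl, Matrix.cons_val,
        Matrix.cons_val_two, Matrix.tail_cons, Matrix.head_cons]) <;>
      field_simp <;>
      first
      | linear_combination (-(ξ 0 : ℂ)) * hv + (-(v 0))*hNsq + ((ξ 0:ℂ)*((ξ 0:ℂ)*v 0 + (ξ 1:ℂ)*v 1 + (ξ 2:ℂ)*v 2) - ((ξ 0:ℂ)^2+(ξ 1:ℂ)^2+(ξ 2:ℂ)^2)*(v 0))*Complex.I_sq
      | linear_combination (-(ξ 1 : ℂ)) * hv + (-(v 1))*hNsq + ((ξ 1:ℂ)*((ξ 0:ℂ)*v 0 + (ξ 1:ℂ)*v 1 + (ξ 2:ℂ)*v 2) - ((ξ 0:ℂ)^2+(ξ 1:ℂ)^2+(ξ 2:ℂ)^2)*(v 1))*Complex.I_sq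
      | linear_combination (-(ξ 2 : ℂ)) * hv + (-(v 2))*hNsq + ((ξ 2:ℂ)*((ξ 0:ℂ)*v 0 + (ξ 1:ℂ)*v 1 + (ξ 2:ℂ)*v 2) - ((ξ 0:ℂ)^2+(ξ 1:ℂ)^2+(ξ 2:ℂ)^2)*(v 2))*Complex.I_sq
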